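/- arXiv:math/0608283 — 3 statements merged into one kernel-verified Lean document; each statement's English description precedes it below -/
import Mathlib

section
/- Let H be a complex Hilbert space with a Hilbert (orthonormal) basis (e_k)_{k∈ℕ}. A sequence (g_k)_{k∈ℕ} of vectors in H is a frame for H if and only if there exists a continuous linear surjective operator U : H → H such that g_k = U e_k for all k ∈ ℕ. -/
open scoped ComplexInnerProductSpace ENNReal

/-- A sequence `g` in a complex Hilbert space `H` is a frame for `H`:
there are `A, B > 0` with `A‖f‖² ≤ Σ_k |⟨f, g_k⟩|² ≤ B‖f‖²` for all `f`
(the sums being convergent). -/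
def IsFrame {H : Type*} [NormedAddCommGroup H] [InnerProductSpace ℂ H]
    {K : Type*} (g : K → H) : Prop :=
  ∃ A B : ℝ, 0 < A ∧ 0 < B ∧ ∀ f : H,
    Summable (fun k => ‖⟪g k, f⟫‖ ^ 2) ∧
    A * ‖f‖ ^ 2 ≤ ∑' k, ‖⟪g k, f⟫‖ ^ 2 ∧
    ∑' k, ‖⟪g k, f⟫‖ ^ 2 ≤ B * ‖f‖ ^ 2

private lemma parseval_aux {H : Type*} [NormedAddCommGroup H] [InnerProductSpace ℂ H]
    [CompleteSpace H] (e : HilbertBasis ℕ ℂ H) (h : H) :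
    HasSum (fun k => ‖⟪e k, h⟫‖ ^ 2) (‖h‖ ^ 2) := by
  have h2 := (e.hasSum_inner_mul_inner h h).mapL Complex.reCLM
  have hl : ∀ k : ℕ, Complex.reCLM (⟪h, e k⟫ * ⟪e k, h⟫) = ‖⟪e k, h⟫‖ ^ 2 := by
    intro k
    rw [Complex.reCLM_apply, ← inner_conj_symm h (e k), ← Complex.normSq_eq_conj_mul_self,
      Complex.ofReal_re, Complex.normSq_eq_norm_sq]
  have hr : Complex.reCLM ⟪h, h⟫ = ‖h‖ ^ 2 := by
    rw [Complex.reCLM_apply, ← RCLike.re_to_complex, inner_self_eq_norm_sq]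
  simp only [hl, hr] at h2
  exact h2

/-- Let `(e_k)_{k∈ℕ}` be a Hilbert basis of the complex Hilbert space `H`.
A sequence `(g_k)_{k∈ℕ}` is a frame for `H` iff it is the image of `(e_k)`
under a continuous linear surjective operator `U : H → H`. -/
theorem frame_iff_image_of_hilbertBasis
    {H : Type*} [NormedAddCommGroup H] [InnerProductSpace ℂ H] [CompleteSpace H]
    (e : HilbertBasis ℕ ℂ H) (g : ℕ → H) :
    IsFrame g ↔
      ∃ U : H →L[ℂ] H, Function.Surjective U ∧ ∀ k, g k = U (e k) := by
  constructor
  · rintro ⟨A, B, hA, hB, hfr⟩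
    have h2pos : (0:ℝ) < (2:ℝ≥0∞).toReal := by norm_num
    have hmem : ∀ f : H, Memℓp (fun k => ⟪g k, f⟫) 2 := fun f => by
      apply memℓp_gen
      have := (hfr f).1
      have h2 : (2:ℝ≥0∞).toReal = ((2:ℕ):ℝ) := by norm_num
      rw [h2]
      simpa [Real.rpow_natCast] using this
    let Tl : H →ₗ[ℂ] lp (fun _ : ℕ => ℂ) 2 :=
      { toFun := fun f => ⟨fun k => ⟪g k, f⟫, hmem f⟩
        map_add' := fun f f' => by
          apply lp.ext; funext k; simp [inner_add_right]; rfl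
        map_smul' := fun c f => by
          apply lp.ext; funext k; simp [inner_smul_right] }
    have hTapp : ∀ (f : H) (k : ℕ), (Tl f : ∀ _ : ℕ, ℂ) k = ⟪g k, f⟫ := fun f k => rfl
    have hTnormsq : ∀ f : H, ‖Tl f‖ ^ 2 = ∑' k, ‖⟪g k, f⟫‖ ^ 2 := fun f => by
      have := lp.norm_rpow_eq_tsum h2pos (Tl f)
      have h2 : (2:ℝ≥0∞).toReal = ((2:ℕ):ℝ) := by norm_num
      rw [h2] at this
      simp only [Real.rpow_natCast] at this
      simpa [hTapp] using this
    have hTbound : ∀ f : H, ‖Tl f‖ ≤ Real.sqrt B * ‖f‖ := fun f => by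
      have h1 : ‖Tl f‖ ^ 2 ≤ B * ‖f‖ ^ 2 := by rw [hTnormsq]; exact (hfr f).2.2
      have := Real.sqrt_le_sqrt h1
      rwa [Real.sqrt_sq (norm_nonneg _), Real.sqrt_mul hB.le, Real.sqrt_sq (norm_nonneg _)]
        at this
    let T : H →L[ℂ] lp (fun _ : ℕ => ℂ) 2 := Tl.mkContinuous (Real.sqrt B) hTbound
    have hTapp' : ∀ (f : H) (k : ℕ), (T f : ∀ _ : ℕ, ℂ) k = ⟪g k, f⟫ := fun f k => rfl
    let Ts : lp (fun _ : ℕ => ℂ) 2 →L[ℂ] H := ContinuousLinearMap.adjoint T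
    have hTg : ∀ k, Ts (lp.single 2 k 1) = g k := fun k => by
      refine ext_inner_right ℂ fun x => ?_
      rw [ContinuousLinearMap.adjoint_inner_left, lp.inner_single_left]
      simp [hTapp']
    -- the frame operator S = T† T is bounded below
    let S : H →L[ℂ] H := Ts.comp T
    have hSlow : ∀ f : H, A * ‖f‖ ^ 2 ≤ RCLike.re ⟪S f, f⟫ := fun f => by
      have h' : ⟪S f, f⟫ = ⟪T f, T f⟫ := ContinuousLinearMap.adjoint_inner_left T f (T f)
      rw [h', inner_self_eq_norm_sq]
      have h'' : ‖T f‖ ^ 2 = ∑' k, ‖⟪g k, f⟫‖ ^ 2 := hTnormsq f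
      rw [h'']
      exact (hfr f).2.1
    have hSb : ∀ f : H, A * ‖f‖ ≤ ‖S f‖ := fun f => by
      rcases eq_or_ne f 0 with rfl | hf
      · simp
      have h1 := hSlow f
      have h2 : RCLike.re ⟪S f, f⟫ ≤ ‖S f‖ * ‖f‖ := re_inner_le_norm _ _
      have hf' : (0:ℝ) < ‖f‖ := norm_pos_iff.mpr hf
      nlinarith
    have hanti : AntilipschitzWith (Real.toNNReal A⁻¹) S :=
      S.antilipschitz_of_bound fun x => by
        rw [Real.coe_toNNReal _ (by positivity)]
        rw [le_inv_mul_iff₀ hA]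
        exact hSb x
    have hclosed : IsClosed (Set.range S) := hanti.isClosed_range S.uniformContinuous
    have hrange : LinearMap.range (S : H →ₗ[ℂ] H) = (⊤ : Submodule ℂ H) := by
      have hc : IsClosed ((LinearMap.range (S : H →ₗ[ℂ] H) : Submodule ℂ H) : Set H) := by
        have : ((LinearMap.range (S : H →ₗ[ℂ] H) : Submodule ℂ H) : Set H) = Set.range S := by
          ext x; simp
        rw [this]; exact hclosed
      have : CompleteSpace (LinearMap.range (S : H →ₗ[ℂ] H) : Submodule ℂ H) := hc.completeSpace_coe
      rw [← Submodule.orthogonal_eq_bot_iff, Submodule.eq_bot_iff]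
      intro y hy
      have h0 : ⟪S y, y⟫ = 0 :=
        (Submodule.mem_orthogonal _ y).mp hy (S y) (LinearMap.mem_range_self _ y)
      have h1 := hSlow y
      rw [h0] at h1
      simp only [map_zero] at h1
      have : ‖y‖ ^ 2 ≤ 0 := by nlinarith
      have : ‖y‖ = 0 := by nlinarith [sq_nonneg ‖y‖, norm_nonneg y]
      exact norm_eq_zero.mp this
    have hTs_surj : Function.Surjective Ts := fun y => by
      obtain ⟨x, hx⟩ := LinearMap.range_eq_top.mp hrange y
      exact ⟨T x, hx⟩
    let R : H →L[ℂ] lp (fun _ : ℕ => ℂ) 2 :=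
      (e.repr.toContinuousLinearEquiv : H ≃L[ℂ] lp (fun _ : ℕ => ℂ) 2)
    refine ⟨Ts.comp R, ?_, fun k => ?_⟩
    · exact hTs_surj.comp e.repr.toContinuousLinearEquiv.surjective
    · have : R (e k) = lp.single 2 k 1 := e.repr_self k
      simp only [ContinuousLinearMap.comp_apply]
      rw [this, hTg k]
  · rintro ⟨U, hU, hg⟩
    obtain ⟨C, hC, hCy⟩ := U.exists_preimage_norm_le hU
    set V := ContinuousLinearMap.adjoint U with hV
    have key : ∀ (k : ℕ) (f : H), ⟪g k, f⟫ = ⟪e k, V f⟫ := fun k f => by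
      rw [hg, hV, ContinuousLinearMap.adjoint_inner_right]
    refine ⟨(C ^ 2)⁻¹, ‖U‖ ^ 2 + 1, by positivity, by positivity, fun f => ?_⟩
    have hps := parseval_aux e (V f)
    have hsum : Summable (fun k => ‖⟪g k, f⟫‖ ^ 2) := by
      simp only [key]; exact hps.summable
    have htsum : ∑' k, ‖⟪g k, f⟫‖ ^ 2 = ‖V f‖ ^ 2 := by
      simp only [key]; exact hps.tsum_eq
    refine ⟨hsum, ?_, ?_⟩
    · rw [htsum]
      obtain ⟨x, hx, hxn⟩ := hCy f
      have h1 : ‖f‖ ^ 2 ≤ C * ‖f‖ * ‖V f‖ := by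
        have e1 : (‖f‖:ℝ) ^ 2 = RCLike.re ⟪f, f⟫ := (inner_self_eq_norm_sq f).symm
        have e2 : ⟪f, f⟫ = ⟪x, V f⟫ := by
          rw [hV, ContinuousLinearMap.adjoint_inner_right, hx]
        have e3 : RCLike.re ⟪x, V f⟫ ≤ ‖x‖ * ‖V f‖ := re_inner_le_norm _ _
        rw [e1, e2]
        calc RCLike.re ⟪x, V f⟫ ≤ ‖x‖ * ‖V f‖ := e3
          _ ≤ C * ‖f‖ * ‖V f‖ := by
            apply mul_le_mul_of_nonneg_right hxn (norm_nonneg _)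
      rw [inv_mul_le_iff₀ (by positivity)]
      nlinarith [sq_nonneg (‖f‖ - C * ‖V f‖), norm_nonneg f, norm_nonneg (V f)]
    · rw [htsum]
      have h1 : ‖V f‖ ≤ ‖U‖ * ‖f‖ := by
        have := V.le_opNorm f
        have hn : ‖V‖ = ‖U‖ := by
          rw [hV]; exact LinearIsometryEquiv.norm_map ContinuousLinearMap.adjoint U
        rwa [hn] at this
      nlinarith [norm_nonneg (V f), norm_nonneg f, norm_nonneg U, mul_nonneg (norm_nonneg U) (norm_nonneg f)]
end

section
/- Let (e_k)_{k∈ℕ} be a Hilbert (orthonormal) basis of ℓ²(ℕ, ℂ) and let N ≥ 1. A sequence (f_k)_{k∈ℕ} of vectors in ℂ^N is a frame for ℂ^N if and only if there exists a continuous linear surjective operator U : ℓ²(ℕ, ℂ) → ℂ^N such that f_k = U e_k for all k ∈ ℕ. -/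
open scoped ComplexInnerProductSpace

open scoped ENNReal NNReal

/-- The squared norm of an `ℓ²` sequence is the sum of squares of entries. -/
lemma lp_norm_sq_aux (z : lp (fun _ : ℕ => ℂ) 2) :
    Summable (fun k => ‖z k‖ ^ 2) ∧ ∑' k, ‖z k‖ ^ 2 = ‖z‖ ^ 2 := by
  have hp : 0 < (2 : ℝ≥0∞).toReal := by norm_num
  have hmem := lp.memℓp z
  have hs := hmem.summable hp
  have hn := lp.norm_rpow_eq_tsum hp z
  simp only [ENNReal.toReal_ofNat, Real.rpow_two] at hs hn
  exact ⟨by simpa [sq] using hs, by rw [← hn]⟩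

/-- If the frame coefficients of `f` are given by the ℓ² coordinates of `C y` in
the Hilbert basis `e`, then the sum of squared coefficients equals `‖C y‖²`. -/
lemma key_sum_aux (N : ℕ) (e : HilbertBasis ℕ ℂ (lp (fun _ : ℕ => ℂ) 2))
    (C : EuclideanSpace ℂ (Fin N) →L[ℂ] lp (fun _ : ℕ => ℂ) 2)
    (f : ℕ → EuclideanSpace ℂ (Fin N))
    (h : ∀ k y, ⟪f k, y⟫ = e.repr (C y) k) (y : EuclideanSpace ℂ (Fin N)) :
    Summable (fun k => ‖⟪f k, y⟫‖ ^ 2) ∧ ∑' k, ‖⟪f k, y⟫‖ ^ 2 = ‖C y‖ ^ 2 := by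
  obtain ⟨hs, hn⟩ := lp_norm_sq_aux (e.repr (C y))
  rw [LinearIsometryEquiv.norm_map] at hn
  simp only [← h] at hs hn
  exact ⟨hs, hn⟩

set_option maxHeartbeats 1000000 in
/-- Let `(e_k)_{k∈ℕ}` be a Hilbert basis of `ℓ²(ℕ, ℂ)` and `N ≥ 1`.
A sequence `(f_k)_{k∈ℕ}` in `ℂ^N` is a frame for `ℂ^N` iff it is the image of
`(e_k)` under a continuous linear surjective operator `U : ℓ²(ℕ, ℂ) → ℂ^N`. -/
theorem frame_iff_image_of_hilbertBasis_lp
    (N : ℕ) (hN : 1 ≤ N)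
    (e : HilbertBasis ℕ ℂ (lp (fun _ : ℕ => ℂ) 2))
    (f : ℕ → EuclideanSpace ℂ (Fin N)) :
    IsFrame f ↔
      ∃ U : lp (fun _ : ℕ => ℂ) 2 →L[ℂ] EuclideanSpace ℂ (Fin N),
        Function.Surjective U ∧ ∀ k, f k = U (e k) := by
  constructor
  · rintro ⟨A, B, hA, hB, hfr⟩
    have hmem : ∀ y : EuclideanSpace ℂ (Fin N),
        Memℓp (fun k => (⟪f k, y⟫ : ℂ)) 2 := by
      intro y
      apply memℓp_gen
      simpa [ENNReal.toReal_ofNat, Real.rpow_two, sq] using (hfr y).1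
    let Clin : EuclideanSpace ℂ (Fin N) →ₗ[ℂ] lp (fun _ : ℕ => ℂ) 2 :=
    { toFun := fun y => e.repr.symm ⟨fun k => ⟪f k, y⟫, hmem y⟩
      map_add' := by
        intro y z
        have : (⟨fun k => ⟪f k, y + z⟫, hmem (y + z)⟩ : lp (fun _ : ℕ => ℂ) 2)
            = ⟨fun k => ⟪f k, y⟫, hmem y⟩ + ⟨fun k => ⟪f k, z⟫, hmem z⟩ :=
          Subtype.ext (funext fun k => by
            exact inner_add_right (𝕜 := ℂ) (f k) y z)
        show e.repr.symm ⟨fun k => ⟪f k, y + z⟫, hmem (y + z)⟩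
          = e.repr.symm ⟨fun k => ⟪f k, y⟫, hmem y⟩ + e.repr.symm ⟨fun k => ⟪f k, z⟫, hmem z⟩
        rw [this, map_add]
      map_smul' := by
        intro c y
        have : (⟨fun k => ⟪f k, c • y⟫, hmem (c • y)⟩ : lp (fun _ : ℕ => ℂ) 2)
            = c • ⟨fun k => ⟪f k, y⟫, hmem y⟩ :=
          Subtype.ext (funext fun k => by
            simpa [lp.coeFn_smul] using inner_smul_right (𝕜 := ℂ) (f k) y c)
        show e.repr.symm ⟨fun k => ⟪f k, c • y⟫, hmem (c • y)⟩
          = (RingHom.id ℂ) c • e.repr.symm ⟨fun k => ⟪f k, y⟫, hmem y⟩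
        rw [this, map_smul]
        rfl }
    let C := LinearMap.toContinuousLinearMap Clin
    have hinner : ∀ k y, ⟪f k, y⟫ = e.repr (C y) k := by
      intro k y
      show _ = e.repr (e.repr.symm ⟨fun k => ⟪f k, y⟫, hmem y⟩) k
      rw [LinearIsometryEquiv.apply_symm_apply]
    refine ⟨ContinuousLinearMap.adjoint C, ?_, ?_⟩
    · -- surjectivity
      rw [← ContinuousLinearMap.coe_coe, ← LinearMap.range_eq_top]
      rw [← Submodule.orthogonal_eq_bot_iff (K := LinearMap.range (ContinuousLinearMap.adjoint C : lp (fun _ : ℕ => ℂ) 2 →ₗ[ℂ] EuclideanSpace ℂ (Fin N)))]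
      rw [Submodule.eq_bot_iff]
      intro y hy
      have hCy : C y = 0 := by
        have h1 : ⟪ContinuousLinearMap.adjoint C (C y), y⟫ = 0 :=
          hy _ ⟨C y, rfl⟩
        rw [ContinuousLinearMap.adjoint_inner_left, inner_self_eq_zero] at h1
        exact h1
      have h2 := (key_sum_aux N e C f hinner y).2
      rw [hCy] at h2
      simp only [norm_zero] at h2
      have h3 := (hfr y).2.1
      rw [h2] at h3
      have h4 : ‖y‖ ^ 2 ≤ 0 := by nlinarith
      have h5 : ‖y‖ = 0 := by nlinarith [norm_nonneg y, sq_nonneg ‖y‖]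
      exact norm_eq_zero.mp h5
    · -- f k = U (e k)
      intro k
      apply ext_inner_left ℂ
      intro v
      rw [ContinuousLinearMap.adjoint_inner_right]
      calc (⟪v, f k⟫ : ℂ) = starRingEnd ℂ ⟪f k, v⟫ := (inner_conj_symm _ _).symm
        _ = starRingEnd ℂ (e.repr (C v) k) := by rw [hinner k v]
        _ = starRingEnd ℂ ⟪e k, C v⟫ := by rw [HilbertBasis.repr_apply_apply]
        _ = ⟪C v, e k⟫ := inner_conj_symm _ _
  · rintro ⟨U, hU, hfU⟩
    set C := ContinuousLinearMap.adjoint U with hC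
    have hinner : ∀ k y, ⟪f k, y⟫ = e.repr (C y) k := by
      intro k y
      rw [hfU, HilbertBasis.repr_apply_apply, ContinuousLinearMap.adjoint_inner_right]
    have hker : LinearMap.ker
        (C : EuclideanSpace ℂ (Fin N) →ₗ[ℂ] lp (fun _ : ℕ => ℂ) 2) = ⊥ := by
      rw [LinearMap.ker_eq_bot']
      intro y hy
      have h0 : ∀ z, ⟪z, y⟫ = 0 := by
        intro z
        obtain ⟨x, rfl⟩ := hU z
        rw [← ContinuousLinearMap.adjoint_inner_right U x y, ← hC]
        rw [show C y = 0 from hy, inner_zero_right]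
      have := h0 y
      rwa [inner_self_eq_zero] at this
    obtain ⟨K, hK, hAnti⟩ := LinearMap.exists_antilipschitzWith _ hker
    have hKpos : (0 : ℝ) < (K : ℝ) := hK
    refine ⟨((K : ℝ) ^ 2)⁻¹, ‖C‖ ^ 2 + 1, by positivity, by positivity, fun y => ?_⟩
    obtain ⟨hs, hn⟩ := key_sum_aux N e C f hinner y
    refine ⟨hs, ?_, ?_⟩
    · rw [hn]
      have hle : ‖y‖ ≤ (K : ℝ) * ‖C y‖ := by
        simpa using hAnti.le_mul_norm (map_zero C) y
      rw [inv_mul_le_iff₀ (by positivity)]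
      nlinarith [norm_nonneg y, norm_nonneg (C y)]
    · rw [hn]
      have hle : ‖C y‖ ≤ ‖C‖ * ‖y‖ := C.le_opNorm y
      nlinarith [norm_nonneg y, norm_nonneg (C y), norm_nonneg C, sq_nonneg ‖y‖]
end

section
/- Let H be a complex Hilbert space and let (g_k)_{k∈K} be a frame for H indexed by a countable set K. Then the family of squared norms (‖g_k‖²)_{k∈K} is summable (i.e., Σ_{k∈K} ‖g_k‖² < ∞) if and only if H is finite-dimensional. -/
open scoped ComplexInnerProductSpace

lemma parseval_hasSum {H : Type*} [NormedAddCommGroup H] [InnerProductSpace ℂ H]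
    [CompleteSpace H] {ι : Type*} (b : HilbertBasis ι ℂ H) (x : H) :
    HasSum (fun i => ‖⟪b i, x⟫‖ ^ 2) (‖x‖ ^ 2) := by
  have h := b.hasSum_inner_mul_inner x x
  have h2 : HasSum (fun i => ((‖⟪b i, x⟫‖ : ℂ)) ^ 2) ((‖x‖ : ℂ) ^ 2) := by
    convert h using 2 with i
    · rfl
    · rw [← inner_conj_symm x (b i), RCLike.conj_mul]
      norm_cast
    · rw [inner_self_eq_norm_sq_to_K]; norm_cast
  have h3 := h2.mapL Complex.reCLM
  simpa [← Complex.ofReal_pow] using h3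

set_option maxHeartbeats 1000000 in
set_option maxHeartbeats 1000000 in
/-- For a frame `(g_k)_{k∈K}` (K countable) of a complex Hilbert space `H`, the
family `(‖g_k‖²)_k` is summable iff `H` is finite-dimensional. -/
theorem summable_norm_sq_of_frame_iff_finiteDimensional
    {H : Type*} [NormedAddCommGroup H] [InnerProductSpace ℂ H] [CompleteSpace H]
    {K : Type*} [Countable K] (g : K → H) (hg : IsFrame g) :
    Summable (fun k => ‖g k‖ ^ 2) ↔ FiniteDimensional ℂ H := by
  obtain ⟨A, B, hA, hB, hf⟩ := hg
  constructor
  · intro hs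
    obtain ⟨w, b, hb⟩ := exists_hilbertBasis ℂ H
    have hpar : ∀ x : H, HasSum (fun i : w => ‖⟪(i : H), x⟫‖ ^ 2) (‖x‖ ^ 2) := by
      intro x
      have := parseval_hasSum b x
      rwa [show ⇑b = ((↑) : w → H) from hb] at this
    have hF : Summable (fun p : K × w => ‖⟪(p.2 : H), g p.1⟫‖ ^ 2) := by
      rw [summable_prod_of_nonneg (fun p => by positivity)]
      refine ⟨fun k => (hpar (g k)).summable, ?_⟩
      have : (fun k => ∑' i : w, ‖⟪(i : H), g k⟫‖ ^ 2) = fun k => ‖g k‖ ^ 2 := by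
        funext k; exact (hpar (g k)).tsum_eq
      rw [this]; exact hs
    have hF' : Summable (fun p : w × K => ‖⟪(p.1 : H), g p.2⟫‖ ^ 2) :=
      (Equiv.prodComm w K).summable_iff.mpr hF
    have hswap : Summable (fun i : w => ∑' k, ‖⟪(i : H), g k⟫‖ ^ 2) :=
      ((summable_prod_of_nonneg (fun p => by positivity)).mp hF').2
    have hnorm1 : ∀ i : w, ‖(i : H)‖ = 1 := by
      intro i
      have := b.orthonormal.1 i
      rwa [show ⇑b = ((↑) : w → H) from hb] at this
    have hlow : ∀ i : w, A ≤ ∑' k, ‖⟪(i : H), g k⟫‖ ^ 2 := by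
      intro i
      have h1 := (hf (i : H)).2.1
      rw [hnorm1 i] at h1
      simp only [one_pow, mul_one] at h1
      calc A ≤ ∑' k, ‖⟪g k, (i : H)⟫‖ ^ 2 := h1
        _ = ∑' k, ‖⟪(i : H), g k⟫‖ ^ 2 := by
            congr 1; funext k; rw [norm_inner_symm]
    have hfin : Finite w := by
      by_contra h
      rw [not_finite_iff_infinite] at h
      have := hswap.tendsto_cofinite_zero
      obtain ⟨i, hi⟩ := (this.eventually (gt_mem_nhds hA)).exists
      exact absurd (hlow i) (not_le.mpr hi)
    haveI := hfin
    have hd := b.dense_span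
    rw [show ⇑b = ((↑) : w → H) from hb] at hd
    set S := Submodule.span ℂ (Set.range ((↑) : w → H)) with hS
    have hfd : FiniteDimensional ℂ S := FiniteDimensional.span_of_finite ℂ (Set.finite_range _)
    have hclosed : IsClosed (S : Set H) := S.closed_of_finiteDimensional
    have htop : S = ⊤ :=
      le_antisymm le_top (hd ▸ Submodule.topologicalClosure_minimal S le_rfl hclosed)
    rw [htop] at hfd
    exact Submodule.topEquiv.finiteDimensional
  · intro hfd
    let b := stdOrthonormalBasis ℂ H
    have key : ∀ k, ‖g k‖ ^ 2 = ∑ i, ‖⟪b i, g k⟫‖ ^ 2 := by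
      intro k
      have h := b.sum_inner_mul_inner (g k) (g k)
      calc ‖g k‖ ^ 2 = (⟪g k, g k⟫ : ℂ).re := by
            rw [show ((⟪g k, g k⟫ : ℂ)).re = RCLike.re (⟪g k, g k⟫ : ℂ) from rfl,
              inner_self_eq_norm_sq]
        _ = (∑ i, ⟪g k, b i⟫ * ⟪b i, g k⟫).re := by rw [h]
        _ = ∑ i, (⟪g k, b i⟫ * ⟪b i, g k⟫).re := Complex.re_sum _ _
        _ = ∑ i, ‖⟪b i, g k⟫‖ ^ 2 := by
            refine Finset.sum_congr rfl fun i _ => ?_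
            rw [← inner_conj_symm (g k) (b i), RCLike.conj_mul]
            norm_cast
    have : (fun k => ‖g k‖ ^ 2) = fun k => ∑ i, ‖⟪b i, g k⟫‖ ^ 2 := funext key
    rw [this]
    apply summable_sum
    intro i _
    have := (hf (b i)).1
    convert this using 2 with k
    rw [norm_inner_symm]
end
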